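/- Let X and Y be normed spaces with X a dense, continuously embedded subspace of Y, and suppose X is reflexive. Then the image of Y' under the restriction map is dense in X'. -/

import Mathlib

open NormedSpace

/-- If `X` is a reflexive Banach space embedded continuously and densely in a Banach
space `Y` (via `ι`), then the image of `Y'` under the restriction map `y' ↦ y' ∘ ι` is
dense in `X'`. Reflexivity is expressed by surjectivity of the canonical inclusion of
`X` into its double dual. -/
theorem stmt_11 {X Y : Type*} [NormedAddCommGroup X] [NormedSpace ℝ X] [CompleteSpace X]
    [NormedAddCommGroup Y] [NormedSpace ℝ Y] [CompleteSpace Y]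
    (hrefl : Function.Surjective (NormedSpace.inclusionInDoubleDual ℝ X))
    (ι : X →L[ℝ] Y) (hinj : Function.Injective ι) (hdense : DenseRange ι) :
    Dense (Set.range (fun y' : StrongDual ℝ Y => y'.comp ι)) := by
  set S : Set (StrongDual ℝ X) := Set.range (fun y' : StrongDual ℝ Y => y'.comp ι) with hS
  rw [dense_iff_closure_eq]
  by_contra hne
  obtain ⟨x', hx'⟩ : ∃ x', x' ∉ closure S := by
    by_contra h
    push_neg at h
    exact hne (Set.eq_univ_of_forall h)
  -- the closure of S is closed and convex
  have hSconv : Convex ℝ S := by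
    intro a ha b hb s t hs ht hst
    obtain ⟨ya, rfl⟩ := ha
    obtain ⟨yb, rfl⟩ := hb
    exact ⟨s • ya + t • yb, by ext x; simp [mul_comm]⟩
  obtain ⟨f, u, hfu, hux'⟩ :=
    geometric_hahn_banach_closed_point (hSconv.closure) isClosed_closure hx'
  -- f vanishes on S
  have hsmul : ∀ t : ℝ, ∀ g ∈ S, t • g ∈ S := by
    rintro t g ⟨y', rfl⟩
    exact ⟨t • y', by ext x; simp⟩
  have hf0 : ∀ g ∈ S, f g = 0 := by
    intro g hg
    by_contra h
    have h1 := hfu (((u + 1) / f g) • g) (subset_closure (hsmul _ _ hg))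
    rw [map_smul, smul_eq_mul, div_mul_cancel₀ _ h] at h1
    linarith
  -- by reflexivity, f = J x for some x
  obtain ⟨x, hx⟩ := hrefl f
  have hx0 : x = 0 := by
    apply hinj
    rw [map_zero]
    apply NormedSpace.eq_zero_of_forall_dual_eq_zero ℝ
    intro y'
    have := hf0 (y'.comp ι) ⟨y', rfl⟩
    rw [← hx] at this
    simpa [NormedSpace.dual_def] using this
  have hf : f = 0 := by rw [← hx, hx0, map_zero]
  have h0 : (0 : StrongDual ℝ X) ∈ S := ⟨0, by ext x; simp⟩
  have := hfu 0 (subset_closure h0)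
  rw [map_zero] at this
  rw [hf] at hux'
  simp at hux'
  linarith
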